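/- For every unit square S in T8, any two distinct edges in G_S are at distance 1 or at distance 2. Consequently, every L(1,2)-edge labeling of T8 is injective on G_S, so the 26 edges of G_S receive 26 pairwise distinct labels. -/

import Mathlib

/-- The infinite octagonal grid (king graph on `ℤ × ℤ`): distinct vertices are
adjacent iff their Chebyshev distance is `1`. -/
def T8 : SimpleGraph (ℤ × ℤ) where
  Adj u v := u ≠ v ∧ max |u.1 - v.1| |u.2 - v.2| = 1
  symm := by
    constructor
    rintro u v ⟨h1, h2⟩
    refine ⟨h1.symm, ?_⟩
    rw [abs_sub_comm v.1 u.1, abs_sub_comm v.2 u.2]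
    exact h2
  loopless := by constructor; rintro u ⟨h, -⟩; exact h rfl

/-- Two (unordered pairs regarded as) edges share an endpoint. -/
def SharesEndpoint (e1 e2 : Sym2 (ℤ × ℤ)) : Prop := ∃ v, v ∈ e1 ∧ v ∈ e2

/-- Two edges of `T8` are at distance `1`: distinct and sharing an endpoint. -/
def EdgeDist1 (e1 e2 : Sym2 (ℤ × ℤ)) : Prop := e1 ≠ e2 ∧ SharesEndpoint e1 e2

/-- Two edges of `T8` are at distance `2`: distinct, sharing no endpoint, but some
edge of `T8` shares an endpoint with both. -/
def EdgeDist2 (e1 e2 : Sym2 (ℤ × ℤ)) : Prop :=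
  e1 ≠ e2 ∧ ¬ SharesEndpoint e1 e2 ∧
    ∃ e3 ∈ T8.edgeSet, SharesEndpoint e1 e3 ∧ SharesEndpoint e3 e2

/-- `f` is an `L(1,2)`-edge labeling of `T8`: edges at distance `1` get distinct
labels and edges at distance `2` get labels differing by at least `2`. -/
def IsL12 (f : Sym2 (ℤ × ℤ) → ℕ) : Prop :=
  (∀ e1 ∈ T8.edgeSet, ∀ e2 ∈ T8.edgeSet, EdgeDist1 e1 e2 → f e1 ≠ f e2) ∧
  (∀ e1 ∈ T8.edgeSet, ∀ e2 ∈ T8.edgeSet, EdgeDist2 e1 e2 → 2 ≤ |(f e1 : ℤ) - (f e2 : ℤ)|)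

/-- An `L(1,2)`-edge labeling of `T8` with labels in `{0, …, n}`. -/
def IsL12Bounded (n : ℕ) (f : Sym2 (ℤ × ℤ) → ℕ) : Prop :=
  IsL12 f ∧ ∀ e ∈ T8.edgeSet, f e ≤ n

/-- The unit square `S(a,b)`. -/
def unitSquare (a b : ℤ) : Set (ℤ × ℤ) :=
  {(a, b), (a + 1, b), (a, b + 1), (a + 1, b + 1)}

/-- `GS S`: the set of edges of `T8` incident to at least one vertex of `S`. -/
def GS (S : Set (ℤ × ℤ)) : Set (Sym2 (ℤ × ℤ)) :=
  {e | e ∈ T8.edgeSet ∧ ∃ v ∈ S, v ∈ e}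

/-- `Sprime a b`: vertices at Chebyshev distance at most `2` from some vertex of
`S(a,b)` (that is, `S ∪ N(S) ∪ N(N(S))`). -/
def Sprime (a b : ℤ) : Set (ℤ × ℤ) :=
  {u | ∃ v ∈ unitSquare a b, max |u.1 - v.1| |u.2 - v.2| ≤ 2}

/-- Two edges sharing an endpoint `v`, written `e1 = {v, v+d1}` and `e2 = {v, v+d2}`,
are at angle `45°` if exactly one of `d1, d2` has both coordinates nonzero and
`d1 · d2 = 1`. -/
def Angle45 (e1 e2 : Sym2 (ℤ × ℤ)) : Prop :=
  ∃ v d1 d2 : ℤ × ℤ, e1 = s(v, v + d1) ∧ e2 = s(v, v + d2) ∧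
    Xor' (d1.1 ≠ 0 ∧ d1.2 ≠ 0) (d2.1 ≠ 0 ∧ d2.2 ≠ 0) ∧
    d1.1 * d2.1 + d1.2 * d2.2 = 1

/-- An edge is slanting if its endpoints differ in both coordinates. -/
def Slanting (e : Sym2 (ℤ × ℤ)) : Prop :=
  ∃ u v : ℤ × ℤ, e = s(u, v) ∧ u.1 ≠ v.1 ∧ u.2 ≠ v.2

/-- `e, e', e''` form the edge set of a triangle of `T8`. -/
def TriangleEdgeSet (e e' e'' : Sym2 (ℤ × ℤ)) : Prop :=
  ∃ u v w : ℤ × ℤ, T8.Adj u v ∧ T8.Adj v w ∧ T8.Adj u w ∧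
    ({e, e', e''} : Set (Sym2 (ℤ × ℤ))) = {s(u, v), s(v, w), s(u, w)}

/-- A triangle of `T8`: three pairwise adjacent vertices. -/
def IsTriangle (t : Finset (ℤ × ℤ)) : Prop :=
  t.card = 3 ∧ ∀ u ∈ t, ∀ v ∈ t, u ≠ v → T8.Adj u v

/-- The edges of a triangle. -/
def triangleEdges (t : Finset (ℤ × ℤ)) : Set (Sym2 (ℤ × ℤ)) :=
  {e | ∃ u ∈ t, ∃ v ∈ t, u ≠ v ∧ e = s(u, v)}



lemma sq_adj {a b : ℤ} {u v : ℤ × ℤ} (hu : u ∈ unitSquare a b)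
    (hv : v ∈ unitSquare a b) (hne : u ≠ v) : T8.Adj u v := by
  refine ⟨hne, ?_⟩
  simp only [unitSquare, Set.mem_insert_iff, Set.mem_singleton_iff] at hu hv
  rcases hu with h|h|h|h <;> rcases hv with h'|h'|h'|h' <;> subst h <;> subst h' <;>
    first
      | exact absurd rfl hne
      | simp

/-- Any two distinct edges of `G_S` are at distance `1` or `2`;
consequently every `L(1,2)`-edge labeling of `T8` is injective on `G_S`. -/
theorem GS_pairwise_close_and_injOn (a b : ℤ) :
    (∀ e1 ∈ GS (unitSquare a b), ∀ e2 ∈ GS (unitSquare a b), e1 ≠ e2 →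
      EdgeDist1 e1 e2 ∨ EdgeDist2 e1 e2) ∧
    (∀ f : Sym2 (ℤ × ℤ) → ℕ, IsL12 f → Set.InjOn f (GS (unitSquare a b))) := by
  have key : ∀ e1 ∈ GS (unitSquare a b), ∀ e2 ∈ GS (unitSquare a b), e1 ≠ e2 →
      EdgeDist1 e1 e2 ∨ EdgeDist2 e1 e2 := by
    rintro e1 ⟨he1, v1, hv1, hv1e⟩ e2 ⟨he2, v2, hv2, hv2e⟩ hne
    by_cases hsh : SharesEndpoint e1 e2
    · exact Or.inl ⟨hne, hsh⟩
    · refine Or.inr ⟨hne, hsh, ?_⟩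
      have hv12 : v1 ≠ v2 := by rintro rfl; exact hsh ⟨v1, hv1e, hv2e⟩
      exact ⟨s(v1, v2), sq_adj hv1 hv2 hv12,
        ⟨v1, hv1e, Sym2.mem_mk_left _ _⟩, ⟨v2, Sym2.mem_mk_right _ _, hv2e⟩⟩
  refine ⟨key, ?_⟩
  intro f hf e1 he1 e2 he2 hfe
  by_contra hne
  rcases key e1 he1 e2 he2 hne with h | h
  · exact hf.1 e1 he1.1 e2 he2.1 h hfe
  · have := hf.2 e1 he1.1 e2 he2.1 h
    rw [hfe] at this; simp at this
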